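/- For v ≥ 4 and d ≥ 1, the number of diamond permutations of type (v,d) avoiding both 132 and 213 equals 2^{d-1}. -/

import Mathlib

/-!
Common definitions.  Positions and values are 0-indexed throughout:
a "diamond permutation of type (v,d)" is a permutation of `Fin (v*d)`
whose `i`-th block of `v` consecutive positions (positions `i*v, …, i*v+v-1`)
has its minimum value in the first position and its maximum value in the
last position of the block.
-/

def IsDiamond (v d : ℕ) (π : Equiv.Perm (Fin (v * d))) : Prop :=
  ∀ i, i < d → ∀ j, j < v →
    ∀ (h0 : i * v < v * d) (hj : i * v + j < v * d) (hl : i * v + (v - 1) < v * d),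
      π ⟨i * v, h0⟩ ≤ π ⟨i * v + j, hj⟩ ∧ π ⟨i * v + j, hj⟩ ≤ π ⟨i * v + (v - 1), hl⟩

def Avoids123 {n : ℕ} (π : Equiv.Perm (Fin n)) : Prop :=
  ¬ ∃ i j k : Fin n, i < j ∧ j < k ∧ π i < π j ∧ π j < π k

def Avoids132 {n : ℕ} (π : Equiv.Perm (Fin n)) : Prop :=
  ¬ ∃ i j k : Fin n, i < j ∧ j < k ∧ π i < π k ∧ π k < π j

def Avoids213 {n : ℕ} (π : Equiv.Perm (Fin n)) : Prop :=
  ¬ ∃ i j k : Fin n, i < j ∧ j < k ∧ π j < π i ∧ π i < π k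

def Avoids231 {n : ℕ} (π : Equiv.Perm (Fin n)) : Prop :=
  ¬ ∃ i j k : Fin n, i < j ∧ j < k ∧ π k < π i ∧ π i < π j

def Avoids312 {n : ℕ} (π : Equiv.Perm (Fin n)) : Prop :=
  ¬ ∃ i j k : Fin n, i < j ∧ j < k ∧ π j < π k ∧ π k < π i

def Avoids321 {n : ℕ} (π : Equiv.Perm (Fin n)) : Prop :=
  ¬ ∃ i j k : Fin n, i < j ∧ j < k ∧ π k < π j ∧ π j < π i

/-- `π` contains the pattern `ρ`: some subsequence of `π` is order-isomorphic to `ρ`. -/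
def ContainsPat {m n : ℕ} (ρ : Equiv.Perm (Fin m)) (π : Equiv.Perm (Fin n)) : Prop :=
  ∃ f : Fin m → Fin n, StrictMono f ∧ ∀ a b, π (f a) < π (f b) ↔ ρ a < ρ b

def AvoidsPat {m n : ℕ} (ρ : Equiv.Perm (Fin m)) (π : Equiv.Perm (Fin n)) : Prop :=
  ¬ ContainsPat ρ π

/-- The reverse-complement of a permutation: `(rcPerm π) i = n - 1 - π (n - 1 - i)`. -/
def rcPerm {n : ℕ} (π : Equiv.Perm (Fin n)) : Equiv.Perm (Fin n) :=
  (Fin.revPerm.trans π).trans Fin.revPerm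

/-- The number of descents of `π`. -/
noncomputable def desNum {n : ℕ} (π : Equiv.Perm (Fin n)) : ℕ :=
  Nat.card {i : Fin n // ∃ h : i.1 + 1 < n, π ⟨i.1 + 1, h⟩ < π i}

namespace AvProof

variable {n : ℕ}

/-- Descent at position `p` (between `p` and `p+1`). -/
def Desc (π : Equiv.Perm (Fin n)) (p : ℕ) : Prop :=
  ∃ h : p + 1 < n, π ⟨p + 1, h⟩ < π ⟨p, Nat.lt_of_succ_lt h⟩

/-- Structural property: any later value is either smaller, or bigger by exactly
the position difference. -/
def PropP (π : Equiv.Perm (Fin n)) : Prop :=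
  ∀ p q : Fin n, p < q → π q < π p ∨ (π q).1 = (π p).1 + (q.1 - p.1)

lemma step_ascent {π : Equiv.Perm (Fin n)} (h132 : Avoids132 π) (h213 : Avoids213 π)
    (p : ℕ) (h : p + 1 < n) (hasc : π ⟨p, Nat.lt_of_succ_lt h⟩ < π ⟨p + 1, h⟩) :
    (π ⟨p + 1, h⟩).1 = (π ⟨p, Nat.lt_of_succ_lt h⟩).1 + 1 := by
  by_contra hne
  have hasc' : (π ⟨p, Nat.lt_of_succ_lt h⟩).1 < (π ⟨p + 1, h⟩).1 := hasc
  have hlt : (π ⟨p, Nat.lt_of_succ_lt h⟩).1 + 1 < (π ⟨p + 1, h⟩).1 := by omega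
  have hwlt : (π ⟨p, Nat.lt_of_succ_lt h⟩).1 + 1 < n := lt_trans hlt (π ⟨p + 1, h⟩).2
  have hπk : π (π.symm ⟨_, hwlt⟩) = ⟨(π ⟨p, Nat.lt_of_succ_lt h⟩).1 + 1, hwlt⟩ :=
    π.apply_symm_apply _
  have hv : (π (π.symm ⟨_, hwlt⟩)).1 = (π ⟨p, Nat.lt_of_succ_lt h⟩).1 + 1 := by rw [hπk]
  have hkP : (π.symm ⟨_, hwlt⟩).1 ≠ p := by
    intro he
    have : π.symm ⟨_, hwlt⟩ = ⟨p, Nat.lt_of_succ_lt h⟩ := Fin.ext he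
    rw [this] at hv; omega
  have hkQ : (π.symm ⟨_, hwlt⟩).1 ≠ p + 1 := by
    intro he
    have : π.symm ⟨_, hwlt⟩ = ⟨p + 1, h⟩ := Fin.ext he
    rw [this] at hv; omega
  have hPw : (π ⟨p, Nat.lt_of_succ_lt h⟩).1 < (π (π.symm ⟨_, hwlt⟩)).1 := by omega
  have hwQ : (π (π.symm ⟨_, hwlt⟩)).1 < (π ⟨p + 1, h⟩).1 := by omega
  rcases lt_trichotomy (π.symm ⟨_, hwlt⟩).1 p with hc | hc | hc
  · exact h213 ⟨π.symm ⟨_, hwlt⟩, ⟨p, Nat.lt_of_succ_lt h⟩, ⟨p + 1, h⟩,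
      hc, Nat.lt_succ_self p, hPw, hwQ⟩
  · exact hkP hc
  · have hc' : p + 1 < (π.symm ⟨_, hwlt⟩).1 := by omega
    exact h132 ⟨⟨p, Nat.lt_of_succ_lt h⟩, ⟨p + 1, h⟩, π.symm ⟨_, hwlt⟩,
      Nat.lt_succ_self p, hc', hPw, hwQ⟩

lemma step_descent {π : Equiv.Perm (Fin n)} (h132 : Avoids132 π)
    (p : ℕ) (h : p + 1 < n) (hdesc : π ⟨p + 1, h⟩ < π ⟨p, Nat.lt_of_succ_lt h⟩) :
    ∀ k : Fin n, k.1 ≤ p → π ⟨p + 1, h⟩ < π k := by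
  intro k hkp
  by_contra hnot
  have hkQ : k ≠ ⟨p + 1, h⟩ := by
    intro he; rw [he] at hkp; exact Nat.not_succ_le_self p hkp
  have hlt : π k < π ⟨p + 1, h⟩ := by
    rcases lt_or_ge (π k) (π ⟨p + 1, h⟩) with h' | h'
    · exact h'
    · rcases eq_or_lt_of_le h' with h'' | h''
      · exact absurd (π.injective h'').symm hkQ
      · exact absurd h'' hnot
  have hkP : k.1 < p := by
    rcases eq_or_lt_of_le hkp with h' | h'
    · exfalso
      have : k = ⟨p, Nat.lt_of_succ_lt h⟩ := Fin.ext h'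
      rw [this] at hlt; exact absurd hdesc (lt_asymm hlt)
    · exact h'
  exact h132 ⟨k, ⟨p, Nat.lt_of_succ_lt h⟩, ⟨p + 1, h⟩, hkP,
    Nat.lt_succ_self p, hlt, hdesc⟩

lemma propP_of_avoids {π : Equiv.Perm (Fin n)} (h132 : Avoids132 π) (h213 : Avoids213 π) :
    PropP π := by
  have key : ∀ m (hm : m < n) (p : Fin n), p.1 < m →
      π ⟨m, hm⟩ < π p ∨ (π ⟨m, hm⟩).1 = (π p).1 + (m - p.1) := by
    intro m
    induction m with
    | zero => intro _ _ hp; omega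
    | succ m ih =>
      intro hm p hp
      have hmn : m < n := Nat.lt_of_succ_lt hm
      rcases lt_trichotomy (π ⟨m, hmn⟩) (π ⟨m + 1, hm⟩) with hasc | heq | hdesc
      · have h1 : (π ⟨m + 1, hm⟩).1 = (π ⟨m, hmn⟩).1 + 1 := step_ascent h132 h213 m hm hasc
        by_cases hpm : p.1 = m
        · right
          have : p = ⟨m, hmn⟩ := Fin.ext hpm
          rw [this]; omega
        · rcases ih hmn p (by omega) with h2 | h2
          · left
            rw [Fin.lt_def] at h2 ⊢
            have hne : (π ⟨m + 1, hm⟩).1 ≠ (π p).1 := by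
              intro he
              have h3 : (⟨m + 1, hm⟩ : Fin n) = p := π.injective (Fin.ext he)
              have := congrArg Fin.val h3
              simp at this; omega
            omega
          · right; omega
      · exfalso
        have := congrArg Fin.val (π.injective heq)
        simp at this
      · left; exact step_descent h132 m hm hdesc p (by omega)
  intro p q hpq
  have : q = ⟨q.1, q.2⟩ := rfl
  rw [this]
  exact key q.1 q.2 p hpq

lemma avoids_of_propP {π : Equiv.Perm (Fin n)} (hP : PropP π) :
    Avoids132 π ∧ Avoids213 π := by
  constructor
  · rintro ⟨i, j, k, hij, hjk, h1, h2⟩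
    rcases hP i j hij with h | h
    · exact absurd (lt_trans h1 h2) (lt_asymm h)
    · rcases hP i k (lt_trans hij hjk) with h' | h'
      · exact absurd h1 (lt_asymm h')
      · rw [Fin.lt_def] at hij hjk h2; omega
  · rintro ⟨i, j, k, hij, hjk, h1, h2⟩
    rcases hP i k (lt_trans hij hjk) with h' | h'
    · exact absurd h2 (lt_asymm h')
    · rcases hP j k hjk with h'' | h''
      · exact absurd (lt_trans h1 h2) (lt_asymm h'')
      · rw [Fin.lt_def] at hij hjk h1; omega

/-- If there is no descent between `p` and `m`, values increase by one each step. -/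
lemma noDesc_formula {π : Equiv.Perm (Fin n)} (hP : PropP π) :
    ∀ m (hm : m < n) (p : Fin n), p.1 < m → (∀ r, p.1 ≤ r → r < m → ¬ Desc π r) →
      (π ⟨m, hm⟩).1 = (π p).1 + (m - p.1) := by
  intro m
  induction m with
  | zero => intro _ _ hp; omega
  | succ m ih =>
    intro hm p hp hnd
    have hmn : m < n := Nat.lt_of_succ_lt hm
    have hstep : (π ⟨m + 1, hm⟩).1 = (π ⟨m, hmn⟩).1 + 1 := by
      have hnd' : ¬ Desc π m := hnd m (by omega) (by omega)
      rcases hP ⟨m, hmn⟩ ⟨m + 1, hm⟩ (Nat.lt_succ_self m) with h | h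
      · exact absurd ⟨hm, h⟩ hnd'
      · simpa using h
    by_cases hpm : p.1 = m
    · have : p = ⟨m, hmn⟩ := Fin.ext hpm
      rw [this]; omega
    · have := ih hmn p (by omega) (fun r h1 h2 => hnd r h1 (by omega))
      omega

/-- If the value formula holds, there is no descent in between. -/
lemma formula_noDesc {π : Equiv.Perm (Fin n)} (hP : PropP π)
    (p q : Fin n) (hpq : p < q) (hf : (π q).1 = (π p).1 + (q.1 - p.1)) :
    ∀ r, p.1 ≤ r → r < q.1 → ¬ Desc π r := by
  intro r h1 h2 ⟨hr1, hdesc⟩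
  have hrn : r < n := Nat.lt_of_succ_lt hr1
  -- bound π ⟨r⟩ by π p
  have hb1 : (π ⟨r, hrn⟩).1 ≤ (π p).1 + (r - p.1) := by
    rcases eq_or_lt_of_le h1 with h' | h'
    · have hpe : p = ⟨r, hrn⟩ := Fin.ext h'
      rw [hpe]; omega
    · rcases hP p ⟨r, hrn⟩ h' with h'' | h''
      · have : (π ⟨r, hrn⟩).1 < (π p).1 := h''
        omega
      · simp at h''; omega
  -- bound π q by π ⟨r+1⟩
  have hb2 : (π q).1 ≤ (π ⟨r + 1, hr1⟩).1 + (q.1 - (r + 1)) := by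
    rcases eq_or_lt_of_le (show r + 1 ≤ q.1 by omega) with h' | h'
    · have : q = ⟨r + 1, hr1⟩ := Fin.ext h'.symm
      rw [this]; omega
    · rcases hP ⟨r + 1, hr1⟩ q h' with h'' | h''
      · have : (π q).1 < (π ⟨r + 1, hr1⟩).1 := h''
        omega
      · simp at h''; omega
  have hd : (π ⟨r + 1, hr1⟩).1 < (π ⟨r, hrn⟩).1 := hdesc
  rw [Fin.lt_def] at hpq
  omega

/-- For `p < q`: `π p < π q` iff there is no descent in `[p, q)`. -/
lemma lt_iff_noDesc {π : Equiv.Perm (Fin n)} (hP : PropP π)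
    (p q : Fin n) (hpq : p < q) :
    (π p < π q ↔ ∀ r, p.1 ≤ r → r < q.1 → ¬ Desc π r) := by
  constructor
  · intro hlt
    rcases hP p q hpq with h | h
    · exact absurd hlt (lt_asymm h)
    · exact formula_noDesc hP p q hpq h
  · intro hnd
    have hq : q = ⟨q.1, q.2⟩ := rfl
    have hf := noDesc_formula hP q.1 q.2 p hpq hnd
    simp only [Fin.eta] at hf
    rw [Fin.lt_def]
    rw [Fin.lt_def] at hpq
    omega

lemma card_lt_filter (π : Equiv.Perm (Fin n)) (x : Fin n) :
    (Finset.univ.filter fun q => π q < π x).card = (π x).1 := by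
  have h1 : (Finset.univ.filter fun q => π q < π x) =
      (Finset.univ.filter fun y => y < π x).image π.symm := by
    ext q
    simp only [Finset.mem_filter, Finset.mem_image, Finset.mem_univ, true_and]
    constructor
    · intro h; exact ⟨π q, h, π.symm_apply_apply q⟩
    · rintro ⟨y, hy, rfl⟩; simpa using hy
  rw [h1, Finset.card_image_of_injective _ π.symm.injective]
  have : (Finset.univ.filter fun y => y < π x) = Finset.Iio (π x) := by
    ext y; simp
  rw [this, Fin.card_Iio]

/-- Two permutations with property P and the same descent set are equal. -/
lemma perm_eq_of_desc_eq {π σ : Equiv.Perm (Fin n)} (hπ : PropP π) (hσ : PropP σ)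
    (hdesc : ∀ p, Desc π p ↔ Desc σ p) : π = σ := by
  have key : ∀ x q : Fin n, (π q < π x ↔ σ q < σ x) := by
    intro x q
    rcases lt_trichotomy q x with hc | hc | hc
    · rw [lt_iff_noDesc hπ q x hc, lt_iff_noDesc hσ q x hc]
      constructor
      · intro h r h1 h2 hD; exact h r h1 h2 ((hdesc r).mpr hD)
      · intro h r h1 h2 hD; exact h r h1 h2 ((hdesc r).mp hD)
    · subst hc; simp
    · have e1 := lt_iff_noDesc hπ x q hc
      have e2 := lt_iff_noDesc hσ x q hc
      have hne1 : π q ≠ π x := fun h => (lt_irrefl x (by rw [π.injective h] at hc; exact hc))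
      have hne2 : σ q ≠ σ x := fun h => (lt_irrefl x (by rw [σ.injective h] at hc; exact hc))
      have hnd : (∀ r, x.1 ≤ r → r < q.1 → ¬ Desc π r) ↔
          (∀ r, x.1 ≤ r → r < q.1 → ¬ Desc σ r) :=
        ⟨fun h r h1 h2 hD => h r h1 h2 ((hdesc r).mpr hD),
         fun h r h1 h2 hD => h r h1 h2 ((hdesc r).mp hD)⟩
      constructor
      · intro h
        by_contra h'
        have h2 : σ x < σ q := lt_of_le_of_ne (not_lt.mp h') (fun he => hne2 he.symm)
        have h3 : π x < π q := e1.mpr (hnd.mpr (e2.mp h2))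
        exact absurd h (lt_asymm h3)
      · intro h
        by_contra h'
        have h2 : π x < π q := lt_of_le_of_ne (not_lt.mp h') (fun he => hne1 he.symm)
        have h3 : σ x < σ q := e2.mpr (hnd.mp (e1.mp h2))
        exact absurd h (lt_asymm h3)
  apply Equiv.ext
  intro x
  have h1 : (π x).1 = (σ x).1 := by
    rw [← card_lt_filter π x, ← card_lt_filter σ x]
    congr 1
    apply Finset.filter_congr
    intro q _
    simp only [key x q]
  exact Fin.ext h1

/-! Cut structure on block indices. -/

variable {d : ℕ}

/-- Cut indicator on block boundaries `0,…,d`: always cut at `0` and at `≥ d`;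
at internal boundary `j ∈ [1, d-1]` cut iff `b ⟨j-1⟩`. -/
def cb (d : ℕ) (b : Fin (d - 1) → Bool) : ℕ → Bool := fun j =>
  if j = 0 then true else if d ≤ j then true
  else if h : j - 1 < d - 1 then b ⟨j - 1, h⟩ else true

lemma cb_zero (b : Fin (d - 1) → Bool) : cb d b 0 = true := by simp [cb]

lemma cb_ge (b : Fin (d - 1) → Bool) {j : ℕ} (h : d ≤ j) : cb d b j = true := by
  unfold cb
  rcases Nat.eq_zero_or_pos j with h0 | h0
  · subst h0; simp
  · rw [if_neg (by omega), if_pos h]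

lemma cb_d (b : Fin (d - 1) → Bool) : cb d b d = true := cb_ge b le_rfl

lemma cb_mid (b : Fin (d - 1) → Bool) {j : ℕ} (h0 : j ≠ 0) (hd : j < d)
    (h : j - 1 < d - 1) : cb d b j = b ⟨j - 1, h⟩ := by
  simp [cb, h0, Nat.not_le.mpr hd, h]

/-- Start (block index) of the run containing block `bl`. -/
def Ablk (d : ℕ) (b : Fin (d - 1) → Bool) (bl : ℕ) : ℕ :=
  Nat.findGreatest (fun j => cb d b j = true) bl

/-- End (block index, exclusive) of the run containing block `bl`. -/
lemma exE (b : Fin (d - 1) → Bool) (bl : ℕ) : ∃ j, bl < j ∧ cb d b j = true := by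
  refine ⟨max d (bl + 1), by omega, ?_⟩
  rcases le_or_gt d (bl + 1) with h | h
  · rw [max_eq_right h]; exact cb_ge b h
  · rw [max_eq_left (le_of_lt h)]; exact cb_d b

/-- End (block index, exclusive) of the run containing block `bl`. -/
def Eblk (d : ℕ) (b : Fin (d - 1) → Bool) (bl : ℕ) : ℕ :=
  Nat.find (exE b bl)

variable (b : Fin (d - 1) → Bool)

lemma A_le (bl : ℕ) : Ablk d b bl ≤ bl := by
  unfold Ablk
  exact Nat.findGreatest_le bl

lemma cb_A (bl : ℕ) : cb d b (Ablk d b bl) = true := by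
  unfold Ablk
  exact Nat.findGreatest_spec (P := fun j => cb d b j = true) (Nat.zero_le bl) (cb_zero b)

lemma A_max {bl j : ℕ} (h1 : Ablk d b bl < j) (h2 : j ≤ bl) : ¬ cb d b j = true := by
  unfold Ablk at h1
  exact Nat.findGreatest_is_greatest (P := fun j => cb d b j = true) h1 h2

lemma le_A {bl j : ℕ} (h1 : j ≤ bl) (h2 : cb d b j = true) : j ≤ Ablk d b bl := by
  unfold Ablk
  exact Nat.le_findGreatest (P := fun j => cb d b j = true) h1 h2

lemma E_gt (bl : ℕ) : bl < Eblk d b bl := (Nat.find_spec (exE b bl)).1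

lemma cb_E (bl : ℕ) : cb d b (Eblk d b bl) = true := (Nat.find_spec (exE b bl)).2

lemma E_min {bl j : ℕ} (h1 : bl < j) (h2 : cb d b j = true) : Eblk d b bl ≤ j :=
  Nat.find_min' (exE b bl) ⟨h1, h2⟩

lemma E_notcut {bl j : ℕ} (h1 : bl < j) (h2 : j < Eblk d b bl) : ¬ cb d b j = true :=
  fun hc => Nat.find_min (exE b bl) h2 ⟨h1, hc⟩

lemma E_le_d {bl : ℕ} (h : bl < d) : Eblk d b bl ≤ d := E_min b h (cb_d b)

lemma sameRun_of {bl bl' : ℕ} (h1 : bl ≤ bl') (h2 : bl' < Eblk d b bl) :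
    Ablk d b bl' = Ablk d b bl ∧ Eblk d b bl' = Eblk d b bl := by
  have hA : Ablk d b bl' = Ablk d b bl := by
    have hge : Ablk d b bl ≤ Ablk d b bl' := le_A b (le_trans (A_le b bl) h1) (cb_A b bl)
    rcases eq_or_lt_of_le hge with h | h
    · exact h.symm
    · exfalso
      have hc := cb_A b bl'
      have hle := A_le b bl'
      rcases le_or_gt (Ablk d b bl') bl with h' | h'
      · exact A_max b h h' hc
      · exact E_notcut b h' (lt_of_le_of_lt hle h2) hc
  refine ⟨hA, le_antisymm ?_ ?_⟩
  · exact E_min b h2 (cb_E b bl)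
  · exact E_min b (lt_of_le_of_lt h1 (E_gt b bl')) (cb_E b bl')

lemma diffRun {bl bl' : ℕ} (h1 : Eblk d b bl ≤ bl') :
    Eblk d b bl ≤ Ablk d b bl' := le_A b h1 (cb_E b bl)

/-! The decoded function. -/

/-- The value of the decoded permutation at position `p`. -/
def decFun (v d : ℕ) (b : Fin (d - 1) → Bool) (p : ℕ) : ℕ :=
  v * d - v * Eblk d b (p / v) + (p - v * Ablk d b (p / v))

/-- Standard facts for a position `p < v * d`. -/
lemma decFun_facts (v : ℕ) (b : Fin (d - 1) → Bool) {p : ℕ} (hp : p < v * d) :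
    v * Ablk d b (p / v) ≤ p ∧ p < v * Eblk d b (p / v) ∧
      v * Eblk d b (p / v) ≤ v * d := by
  have hv : 0 < v := by by_contra h; push_neg at h; interval_cases v <;> omega
  have hbl : p / v < d := Nat.div_lt_of_lt_mul (by omega)
  have h1 : v * Ablk d b (p / v) ≤ v * (p / v) := Nat.mul_le_mul_left v (A_le b _)
  have h2 : v * (p / v) ≤ p := Nat.mul_div_le p v
  have h3 : p < v * (p / v + 1) := by
    rw [Nat.mul_succ]
    have ha := Nat.div_add_mod p v
    have hb := Nat.mod_lt p hv
    omega
  have h4 : v * (p / v + 1) ≤ v * Eblk d b (p / v) := Nat.mul_le_mul_left v (E_gt b _)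
  have h5 : v * Eblk d b (p / v) ≤ v * d := Nat.mul_le_mul_left v (E_le_d b hbl)
  exact ⟨le_trans h1 h2, lt_of_lt_of_le h3 h4, h5⟩

lemma decFun_lt (v : ℕ) (b : Fin (d - 1) → Bool) {p : ℕ} (hp : p < v * d) :
    decFun v d b p < v * d := by
  obtain ⟨h1, h2, h3⟩ := decFun_facts v b hp
  unfold decFun
  omega

/-- Same run case: positions in the same run are shifted identically. -/
lemma decFun_same (v : ℕ) (b : Fin (d - 1) → Bool) {p q : ℕ} (hpq : p ≤ q)
    (hq : q < v * d) (hrun : q / v < Eblk d b (p / v)) :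
    decFun v d b q = decFun v d b p + (q - p) := by
  have hpq' : p / v ≤ q / v := Nat.div_le_div_right hpq
  obtain ⟨hA, hE⟩ := sameRun_of b hpq' hrun
  obtain ⟨h1, h2, h3⟩ := decFun_facts v b hq
  have hp : p < v * d := lt_of_le_of_lt hpq hq
  obtain ⟨h1', h2', h3'⟩ := decFun_facts v b hp
  unfold decFun
  rw [hA, hE]
  rw [hA] at h1
  rw [hE] at h2 h3
  omega

/-- Different run case: strictly smaller value. -/
lemma decFun_diff (v : ℕ) (b : Fin (d - 1) → Bool) {p q : ℕ} (hpq : p ≤ q)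
    (hq : q < v * d) (hrun : Eblk d b (p / v) ≤ q / v) :
    decFun v d b q < decFun v d b p := by
  have hEA : Eblk d b (p / v) ≤ Ablk d b (q / v) := diffRun b hrun
  obtain ⟨h1, h2, h3⟩ := decFun_facts v b hq
  have hp : p < v * d := lt_of_le_of_lt hpq hq
  obtain ⟨h1', h2', h3'⟩ := decFun_facts v b hp
  have hmul : v * Eblk d b (p / v) ≤ v * Ablk d b (q / v) := Nat.mul_le_mul_left v hEA
  unfold decFun
  omega


/-! The decoded permutation. -/

lemma decFun_inj (v : ℕ) (b : Fin (d - 1) → Bool) {p q : ℕ} (hp : p < v * d)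
    (hq : q < v * d) (h : decFun v d b p = decFun v d b q) : p = q := by
  rcases lt_trichotomy p q with hc | hc | hc
  · exfalso
    rcases lt_or_ge (q / v) (Eblk d b (p / v)) with hr | hr
    · have := decFun_same v b (le_of_lt hc) hq hr; omega
    · have := decFun_diff v b (le_of_lt hc) hq hr; omega
  · exact hc
  · exfalso
    rcases lt_or_ge (p / v) (Eblk d b (q / v)) with hr | hr
    · have := decFun_same v b (le_of_lt hc) hp hr; omega
    · have := decFun_diff v b (le_of_lt hc) hp hr; omega

noncomputable def decPerm (v d : ℕ) (b : Fin (d - 1) → Bool) : Equiv.Perm (Fin (v * d)) :=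
  Equiv.ofBijective (fun p => ⟨decFun v d b p.1, decFun_lt v b p.2⟩)
    (Finite.injective_iff_bijective.mp (fun p q h => Fin.ext (decFun_inj v b p.2 q.2
      (by simpa [Fin.ext_iff] using h))))

lemma decPerm_apply (v d : ℕ) (b : Fin (d - 1) → Bool) (x : Fin (v * d)) :
    decPerm v d b x = ⟨decFun v d b x.1, decFun_lt v b x.2⟩ := rfl

lemma decPerm_propP (v d : ℕ) (b : Fin (d - 1) → Bool) : PropP (decPerm v d b) := by
  intro p q hpq
  rw [Fin.lt_def] at hpq
  rcases lt_or_ge (q.1 / v) (Eblk d b (p.1 / v)) with hr | hr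
  · right
    have := decFun_same v b (le_of_lt hpq) q.2 hr
    simp only [decPerm_apply]
    omega
  · left
    have := decFun_diff v b (le_of_lt hpq) q.2 hr
    rw [Fin.lt_def]
    simpa [decPerm_apply] using this

lemma blk_div {v : ℕ} (hv : 0 < v) (i j : ℕ) (hj : j < v) : (i * v + j) / v = i := by
  rw [show i * v + j = j + i * v from Nat.add_comm _ _,
    Nat.add_mul_div_right _ _ hv, Nat.div_eq_of_lt hj]
  omega

lemma decPerm_diamond (v d : ℕ) (b : Fin (d - 1) → Bool) : IsDiamond v d (decPerm v d b) := by
  intro i hi j hj h0 hj' hl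
  have hv : 0 < v := by
    rcases Nat.eq_zero_or_pos v with h | h
    · exfalso; subst h; simp at h0
    · exact h
  have hb0 : (i * v) / v = i := by
    have := blk_div hv i 0 hv
    simpa using this
  have hbj : (i * v + j) / v = i := blk_div hv i j hj
  have hbl : (i * v + (v - 1)) / v = i := blk_div hv i (v - 1) (by omega)
  constructor
  · rw [Fin.le_def]
    simp only [decPerm_apply]
    have := decFun_same v b (Nat.le_add_right (i * v) j) hj'
      (by rw [hbj, hb0]; exact E_gt b i)
    omega
  · rw [Fin.le_def]
    simp only [decPerm_apply]
    have := decFun_same v b (show i * v + j ≤ i * v + (v - 1) by omega) hl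
      (by rw [hbl, hbj]; exact E_gt b i)
    omega

lemma desc_decPerm (v : ℕ) (hv : 0 < v) (b : Fin (d - 1) → Bool) {p : ℕ}
    (hp : p + 1 < v * d) :
    Desc (decPerm v d b) p ↔ ((p + 1) % v = 0 ∧ cb d b ((p + 1) / v) = true) := by
  have hiff : Desc (decPerm v d b) p ↔ decFun v d b (p + 1) < decFun v d b p := by
    constructor
    · rintro ⟨h, hlt⟩
      rw [Fin.lt_def] at hlt
      simpa [decPerm_apply] using hlt
    · intro h
      refine ⟨hp, ?_⟩
      rw [Fin.lt_def]
      simpa [decPerm_apply] using h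
  have hdiv : (p + 1) / v = p / v + if v ∣ p + 1 then 1 else 0 := Nat.succ_div
  have hv' : 0 < v := hv
  by_cases hdvd : v ∣ p + 1
  · have hmod : (p + 1) % v = 0 := Nat.mod_eq_zero_of_dvd hdvd
    rw [if_pos hdvd] at hdiv
    cases hcbv : cb d b (p / v + 1) with
    | true =>
      have hdiff := decFun_diff v b ((by omega : p ≤ p + 1)) hp
        (by rw [hdiv]; exact E_min b (Nat.lt_succ_self (p / v)) hcbv)
      rw [hiff]
      constructor
      · intro _
        refine ⟨hmod, ?_⟩
        rw [hdiv]
        exact hcbv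
      · intro _
        exact hdiff
    | false =>
      have hne : Eblk d b (p / v) ≠ p / v + 1 := by
        intro he
        have := cb_E b (p / v)
        rw [he, hcbv] at this
        exact Bool.false_ne_true this
      have hEgt : p / v + 1 < Eblk d b (p / v) := by
        have := E_gt b (p / v)
        omega
      have hsame := decFun_same v b ((by omega : p ≤ p + 1)) hp (by rw [hdiv]; exact hEgt)
      rw [hiff]
      constructor
      · intro h
        exfalso
        omega
      · rintro ⟨-, hc⟩
        rw [hdiv, hcbv] at hc
        exact absurd hc Bool.false_ne_true
  · have hmod : (p + 1) % v ≠ 0 := fun h => hdvd (Nat.dvd_of_mod_eq_zero h)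
    rw [if_neg hdvd] at hdiv
    have hsame := decFun_same v b ((by omega : p ≤ p + 1)) hp
      (by rw [hdiv]; exact E_gt b (p / v))
    rw [hiff]
    constructor
    · intro h
      exfalso
      omega
    · rintro ⟨h1, -⟩; exact absurd h1 hmod

lemma desc_mod {v d : ℕ} {π : Equiv.Perm (Fin (v * d))} (hdia : IsDiamond v d π)
    (h132 : Avoids132 π) {p : ℕ} (hp : p + 1 < v * d)
    (hdesc : π ⟨p + 1, hp⟩ < π ⟨p, Nat.lt_of_succ_lt hp⟩) : (p + 1) % v = 0 := by
  by_contra hmod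
  have hv : 0 < v := by
    rcases Nat.eq_zero_or_pos v with h | h
    · exfalso; subst h; simp at hp
    · exact h
  have hdm : (p + 1) / v * v + (p + 1) % v = p + 1 := Nat.div_add_mod' (p + 1) v
  have hrv : (p + 1) % v < v := Nat.mod_lt _ hv
  have hi : (p + 1) / v < d := Nat.div_lt_of_lt_mul hp
  have hmm : (p + 1) / v * v = (p + 1) / v * v := rfl
  have h0 : (p + 1) / v * v < v * d := by omega
  have hj : (p + 1) / v * v + (p + 1) % v < v * d := by omega
  have hl : (p + 1) / v * v + (v - 1) < v * d := by
    have h1 : ((p + 1) / v + 1) * v ≤ d * v := Nat.mul_le_mul_right v hi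
    have h2 : ((p + 1) / v + 1) * v = (p + 1) / v * v + v := Nat.succ_mul _ _
    have h3 : d * v = v * d := Nat.mul_comm d v
    omega
  have hle := (hdia ((p + 1) / v) hi ((p + 1) % v) hrv h0 hj hl).1
  have heq : (⟨(p + 1) / v * v + (p + 1) % v, hj⟩ : Fin (v * d)) = ⟨p + 1, hp⟩ :=
    Fin.ext hdm
  rw [heq] at hle
  have hs : (p + 1) / v * v ≤ p := by omega
  have hlt := step_descent h132 p hp hdesc ⟨(p + 1) / v * v, h0⟩ hs
  exact absurd (lt_of_le_of_lt hle hlt) (lt_irrefl _)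

noncomputable def enc (v d : ℕ) (π : Equiv.Perm (Fin (v * d))) : Fin (d - 1) → Bool :=
  fun i => @decide (Desc π ((i.1 + 1) * v - 1)) (Classical.propDecidable _)

lemma enc_decPerm (v d : ℕ) (hv : 0 < v) (b : Fin (d - 1) → Bool) :
    enc v d (decPerm v d b) = b := by
  funext i
  have hi := i.2
  have hvpos : 0 < (i.1 + 1) * v := Nat.mul_pos (by omega) hv
  have hp1 : (i.1 + 1) * v - 1 + 1 = (i.1 + 1) * v := by omega
  have hlt : (i.1 + 1) * v < v * d := by
    have h1 : (i.1 + 1) * v ≤ (d - 1) * v := Nat.mul_le_mul_right v (by omega)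
    have h2 : (d - 1 + 1) * v = (d - 1) * v + v := Nat.succ_mul _ _
    have h3 : d - 1 + 1 = d := by omega
    have h4 : d * v = v * d := Nat.mul_comm d v
    rw [h3] at h2
    omega
  have hmod : ((i.1 + 1) * v) % v = 0 := Nat.mul_mod_left (i.1 + 1) v
  have hdivv : ((i.1 + 1) * v) / v = i.1 + 1 := by
    have := blk_div hv (i.1 + 1) 0 hv
    simpa using this
  have hcb : cb d b (i.1 + 1) = b i := by
    rw [cb_mid b (by omega) (by omega) (by omega : i.1 + 1 - 1 < d - 1)]
    exact congrArg b (Fin.ext (by simp))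
  have hdesc := desc_decPerm v hv b (p := (i.1 + 1) * v - 1) (by rw [hp1]; exact hlt)
  rw [hp1] at hdesc
  have hiff : Desc (decPerm v d b) ((i.1 + 1) * v - 1) ↔ b i = true := by
    rw [hdesc, hdivv, hcb]
    simp [hmod]
  show @decide (Desc (decPerm v d b) ((i.1 + 1) * v - 1)) (Classical.propDecidable _) = b i
  by_cases hD : Desc (decPerm v d b) ((i.1 + 1) * v - 1)
  · rw [@decide_eq_true _ (Classical.propDecidable _) hD]
    exact (hiff.mp hD).symm
  · rw [@decide_eq_false _ (Classical.propDecidable _) hD]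
    cases hb : b i with
    | false => rfl
    | true => exact absurd (hiff.mpr hb) hD

lemma decPerm_enc {v d : ℕ} (hv : 0 < v) {π : Equiv.Perm (Fin (v * d))}
    (hdia : IsDiamond v d π) (h132 : Avoids132 π) (h213 : Avoids213 π) :
    decPerm v d (enc v d π) = π := by
  apply perm_eq_of_desc_eq (decPerm_propP v d _) (propP_of_avoids h132 h213)
  intro p
  by_cases hp : p + 1 < v * d
  · rw [desc_decPerm v hv _ hp]
    have hjd : (p + 1) / v < d := Nat.div_lt_of_lt_mul hp
    constructor
    · rintro ⟨hmod, hcb⟩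
      have hdvd : v ∣ p + 1 := Nat.dvd_of_mod_eq_zero hmod
      have hj1 : 1 ≤ (p + 1) / v := (Nat.one_le_div_iff hv).mpr (Nat.le_of_dvd (by omega) hdvd)
      rw [cb_mid _ (by omega) hjd (by omega)] at hcb
      have hpos : ((p + 1) / v - 1 + 1) * v - 1 = p := by
        have he : (p + 1) / v - 1 + 1 = (p + 1) / v := by omega
        have h1 : (p + 1) / v * v = p + 1 := Nat.div_mul_cancel hdvd
        rw [he]
        omega
      unfold enc at hcb
      rw [hpos] at hcb
      exact @of_decide_eq_true _ (Classical.propDecidable _) hcb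
    · intro hD
      obtain ⟨h', hdesc⟩ := hD
      have hmod : (p + 1) % v = 0 := desc_mod hdia h132 h' hdesc
      have hdvd : v ∣ p + 1 := Nat.dvd_of_mod_eq_zero hmod
      have hj1 : 1 ≤ (p + 1) / v := (Nat.one_le_div_iff hv).mpr (Nat.le_of_dvd (by omega) hdvd)
      refine ⟨hmod, ?_⟩
      rw [cb_mid _ (by omega) hjd (by omega)]
      have hpos : ((p + 1) / v - 1 + 1) * v - 1 = p := by
        have he : (p + 1) / v - 1 + 1 = (p + 1) / v := by omega
        have h1 : (p + 1) / v * v = p + 1 := Nat.div_mul_cancel hdvd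
        rw [he]
        omega
      unfold enc
      rw [hpos]
      exact @decide_eq_true _ (Classical.propDecidable _) ⟨h', hdesc⟩
  · constructor
    · rintro ⟨h, -⟩; exact absurd h hp
    · rintro ⟨h, -⟩; exact absurd h hp

end AvProof

theorem avoids132_213_count (v d : ℕ) (hv : 4 ≤ v) (hd : 1 ≤ d) :
    Nat.card {π : Equiv.Perm (Fin (v * d)) // IsDiamond v d π ∧ Avoids132 π ∧ Avoids213 π} =
      2 ^ (d - 1) := by
  have hv0 : 0 < v := by omega
  have e : {π : Equiv.Perm (Fin (v * d)) // IsDiamond v d π ∧ Avoids132 π ∧ Avoids213 π} ≃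
      (Fin (d - 1) → Bool) :=
    { toFun := fun x => AvProof.enc v d x.1
      invFun := fun b => ⟨AvProof.decPerm v d b, AvProof.decPerm_diamond v d b,
        (AvProof.avoids_of_propP (AvProof.decPerm_propP v d b)).1,
        (AvProof.avoids_of_propP (AvProof.decPerm_propP v d b)).2⟩
      left_inv := fun x => Subtype.ext (AvProof.decPerm_enc hv0 x.2.1 x.2.2.1 x.2.2.2)
      right_inv := fun b => AvProof.enc_decPerm v d hv0 b }
  rw [Nat.card_congr e]
  rw [Nat.card_eq_fintype_card]
  simp
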